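/- Let m₁ and m₂ be finite sets with m₁ ∩ m₂ ≠ ∅ but |m₁ ∩ m₂| ≥ 2, and let D be a finite directed acyclic graph modeling a simple consistent linearization containing m₁ and m₂ as nodes. Suppose m₁ ∩ m₂ is not a common successor of m₁ and m₂ in D (i.e., there is no node equal to m₁ ∩ m₂ reachable from both). If additionally every element of m₁ ∩ m₂ is reachable as a singleton from both m₁ and m₂, then the underlying undirected graph of D contains a cycle. -/

import Mathlib

open Relation SimpleGraph

private lemma walkOf {V : Type*} (r : V → V → Prop) {a b : V}
    (h : Relation.ReflTransGen r a b) :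
    ∃ w : (SimpleGraph.fromRel r).Walk a b,
      ∀ x ∈ w.support, Relation.ReflTransGen r a x ∧ Relation.ReflTransGen r x b := by
  induction h with
  | refl =>
    refine ⟨.nil, ?_⟩
    intro x hx
    simp only [SimpleGraph.Walk.support_nil, List.mem_singleton] at hx
    subst hx
    exact ⟨Relation.ReflTransGen.refl, Relation.ReflTransGen.refl⟩
  | @tail b c hab hbc ih =>
    obtain ⟨w, hw⟩ := ih
    by_cases hbc' : b = c
    · subst hbc'
      exact ⟨w, hw⟩
    · refine ⟨w.concat ((SimpleGraph.fromRel_adj r b c).mpr ⟨hbc', Or.inl hbc⟩), ?_⟩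
      intro x hx
      rw [SimpleGraph.Walk.support_concat, List.mem_append] at hx
      rcases hx with hx | hx
      · exact ⟨(hw x hx).1, ((hw x hx).2).tail hbc⟩
      · simp only [List.mem_singleton] at hx
        subst hx
        exact ⟨hab.tail hbc, Relation.ReflTransGen.refl⟩

private lemma auxAB {V : Type*} (r : V → V → Prop) (A B : V → Prop)
    (hA : ∀ {x y}, A x → r x y → A y) (hB : ∀ {x y}, B x → r x y → B y)
    {v : V} (hv : B v) :
    ∀ {u : V} (w : (SimpleGraph.fromRel r).Walk u v), A u →
      (∀ x ∈ w.support, A x ∨ B x) → ∃ y ∈ w.support, A y ∧ B y := by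
  intro u w
  induction w with
  | nil => exact fun hu _ => ⟨_, by simp, hu, hv⟩
  | @cons a b c h w ih =>
    intro hu hAB
    by_cases hb : A b
    · obtain ⟨y, hy, hAy, hBy⟩ := ih hv hb (fun x hx => hAB x (by simp [hx]))
      exact ⟨y, by simp [hy], hAy, hBy⟩
    · have hBb : B b := ((hAB b (by simp)).resolve_left hb)
      rw [SimpleGraph.fromRel_adj] at h
      rcases h.2 with hrr | hrr
      · exact absurd (hA hu hrr) hb
      · exact ⟨a, by simp, hu, hB hBb hrr⟩

theorem stmt17 (n : ℕ) (M : Finset (Finset (Fin n)))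
    (C : Finset (Finset (Finset (Fin n))))
    (hsing : ∀ i : Fin n, {i} ∈ M)
    (hC : ∀ c ∈ C, (∀ m' ∈ c, m' ∈ M) ∧ c.sup id ∈ M)
    (hcons : ∀ m ∈ M, 2 ≤ m.card →
      ∃ c ∈ C, c.sup id = m ∧ ∀ m' ∈ c, m' ⊂ m ∧ m'.card < m.card)
    (hsimple : ∀ c₁ ∈ C, ∀ c₂ ∈ C, c₁.sup id = c₂.sup id → c₁ = c₂)
    (m₁ m₂ : Finset (Fin n)) (hm₁ : m₁ ∈ M) (hm₂ : m₂ ∈ M)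
    (hcard : 2 ≤ (m₁ ∩ m₂).card)
    (hnotsucc : ¬ (Relation.ReflTransGen
        (fun a b => ∃ c ∈ C, a = c.sup id ∧ b ∈ c) m₁ (m₁ ∩ m₂) ∧
      Relation.ReflTransGen
        (fun a b => ∃ c ∈ C, a = c.sup id ∧ b ∈ c) m₂ (m₁ ∩ m₂)))
    (hreach : ∀ i ∈ m₁ ∩ m₂,
      Relation.ReflTransGen (fun a b => ∃ c ∈ C, a = c.sup id ∧ b ∈ c) m₁ {i} ∧
      Relation.ReflTransGen (fun a b => ∃ c ∈ C, a = c.sup id ∧ b ∈ c) m₂ {i}) :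
    ¬ (SimpleGraph.fromRel
        (fun a b => ∃ c ∈ C, a = c.sup id ∧ b ∈ c)).IsAcyclic := by
  intro hac
  set r : Finset (Fin n) → Finset (Fin n) → Prop :=
    fun a b => ∃ c ∈ C, a = c.sup id ∧ b ∈ c with hrdef
  have hsub : ∀ {a b : Finset (Fin n)}, Relation.ReflTransGen r a b → b ⊆ a := by
    intro a b h
    induction h with
    | refl => exact subset_rfl
    | @tail b c h₁ h₂ ih =>
      obtain ⟨cc, hcc, hbeq, hbc⟩ := h₂
      have : c ⊆ b := hbeq ▸ (Finset.le_sup (f := id) hbc)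
      exact this.trans ih
  have hne : (m₁ ∩ m₂).Nonempty := Finset.card_pos.mp (by omega)
  obtain ⟨i₀, hi₀⟩ := hne
  obtain ⟨W1, hW1⟩ := walkOf r (hreach i₀ hi₀).1
  obtain ⟨W2, hW2⟩ := walkOf r (hreach i₀ hi₀).2
  have hpu := SimpleGraph.isAcyclic_iff_path_unique.mp hac
  set W : (SimpleGraph.fromRel r).Walk m₁ m₂ := W1.append W2.reverse with hWdef
  set p : (SimpleGraph.fromRel r).Path m₁ m₂ := W.toPath with hpdef
  have psupp : ∀ (U : (SimpleGraph.fromRel r).Walk m₁ m₂),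
      ∀ x ∈ (p : (SimpleGraph.fromRel r).Walk m₁ m₂).support, x ∈ U.support := by
    intro U x hx
    have : p = U.toPath := hpu _ _
    rw [this] at hx
    exact SimpleGraph.Walk.support_bypass_subset _ hx
  have splitmem : ∀ {a b : Finset (Fin n)} (U1 : (SimpleGraph.fromRel r).Walk m₁ a)
      (U2 : (SimpleGraph.fromRel r).Walk m₂ b) (hab : a = b) (x : Finset (Fin n)),
      x ∈ (U1.append (hab ▸ U2.reverse)).support → x ∈ U1.support ∨ x ∈ U2.support := by
    intro a b U1 U2 hab x hx
    subst hab
    rw [SimpleGraph.Walk.support_append, List.mem_append] at hx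
    rcases hx with hx | hx
    · exact Or.inl hx
    · right
      have := List.tail_subset _ hx
      rwa [SimpleGraph.Walk.support_reverse, List.mem_reverse] at this
  -- every vertex of p reaches {j} for each j ∈ m₁ ∩ m₂
  have key : ∀ j ∈ m₁ ∩ m₂, ∀ x ∈ (p : (SimpleGraph.fromRel r).Walk m₁ m₂).support,
      Relation.ReflTransGen r x {j} := by
    intro j hj x hx
    obtain ⟨U1, hU1⟩ := walkOf r (hreach j hj).1
    obtain ⟨U2, hU2⟩ := walkOf r (hreach j hj).2
    have hx' := psupp (U1.append U2.reverse) x hx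
    rcases splitmem U1 U2 rfl x hx' with h | h
    · exact (hU1 x h).2
    · exact (hU2 x h).2
  have hABall : ∀ x ∈ (p : (SimpleGraph.fromRel r).Walk m₁ m₂).support,
      Relation.ReflTransGen r m₁ x ∨ Relation.ReflTransGen r m₂ x := by
    intro x hx
    have hx' := psupp W x hx
    rcases splitmem W1 W2 rfl x hx' with h | h
    · exact Or.inl (hW1 x h).1
    · exact Or.inr (hW2 x h).1
  obtain ⟨y, hy, hAy, hBy⟩ := auxAB r (fun x => Relation.ReflTransGen r m₁ x)
    (fun x => Relation.ReflTransGen r m₂ x)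
    (fun h hr => h.tail hr) (fun h hr => h.tail hr)
    Relation.ReflTransGen.refl
    (p : (SimpleGraph.fromRel r).Walk m₁ m₂) Relation.ReflTransGen.refl hABall
  have hy1 : y ⊆ m₁ ∩ m₂ := Finset.subset_inter (hsub hAy) (hsub hBy)
  have hy2 : m₁ ∩ m₂ ⊆ y := fun j hj =>
    Finset.singleton_subset_iff.mp (hsub (key j hj y hy))
  have hyeq : y = m₁ ∩ m₂ := Finset.Subset.antisymm hy1 hy2
  exact hnotsucc ⟨hyeq ▸ hAy, hyeq ▸ hBy⟩
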